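/- Given weights w_1,…,w_n ∈ ℤ_+, number of bins k, and capacity b, construct in ℝ^{n+k+kn} the vectors v_{i,j}, u_{i,j} (for (i,j) ∈ [n]×[k]) and c as follows: v_{i,j} has entry w_i at coordinate j, entry 1 at coordinate k+i, entry 1 at coordinate n+k+(i−1)k+j, and 0 elsewhere; u_{i,j} agrees with v_{i,j} except the entries at coordinates j and k+i are 0; c has entry −b at coordinates 1,…,k and −1 at all other coordinates. Then there exist choices p_l ∈ {v_{i,j}, u_{i,j}} (l = (i−1)k+j) and reals λ_1,…,λ_{kn+1} with ∑_l λ_l p_l + λ_{kn+1} c = 0 and ∑_l λ_l = kn+1 (λ_{kn+1} included) if and only if the items with weights w_1,…,w_n can be partitioned into k bins each of total weight exactly b. -/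

import Mathlib

/-- The vector v_{i,j} of the EqualBinPacking reduction (0-based coordinates):
entry w_i at coordinate j, entry 1 at coordinate k+i, entry 1 at coordinate
k+n+i·k+j, and 0 elsewhere. -/
noncomputable def vBP (n k : ℕ) (w : Fin n → ℤ) (i : Fin n) (j : Fin k) :
    Fin (k + n + k * n) → ℝ :=
  fun x => if (x : ℕ) = (j : ℕ) then (w i : ℝ)
    else if (x : ℕ) = k + (i : ℕ) then 1
    else if (x : ℕ) = k + n + (i : ℕ) * k + (j : ℕ) then 1 else 0

/-- The vector u_{i,j}: entry 1 at coordinate k+n+i·k+j and 0 elsewhere. -/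
noncomputable def uBP (n k : ℕ) (i : Fin n) (j : Fin k) : Fin (k + n + k * n) → ℝ :=
  fun x => if (x : ℕ) = k + n + (i : ℕ) * k + (j : ℕ) then 1 else 0

/-- The vector c: entry -b at the first k coordinates and -1 at all other coordinates. -/
noncomputable def cBP (n k : ℕ) (b : ℤ) : Fin (k + n + k * n) → ℝ :=
  fun x => if (x : ℕ) < k then (-b : ℝ) else -1

lemma coord3_lt {n k : ℕ} (i : Fin n) (j : Fin k) :
    k + n + (i:ℕ) * k + (j:ℕ) < k + n + k * n := by
  have h1 : ((i:ℕ)+1) * k ≤ n * k := Nat.mul_le_mul_right k i.2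
  have h2 : (i:ℕ)*k + (j:ℕ) < ((i:ℕ)+1)*k := by
    have := j.2
    rw [Nat.add_mul, Nat.one_mul]; omega
  have h3 : n * k = k * n := Nat.mul_comm n k
  omega

lemma enc_inj {n k : ℕ} {i i' : Fin n} {j j' : Fin k}
    (h : (i:ℕ)*k + (j:ℕ) = (i':ℕ)*k + (j':ℕ)) : i = i' ∧ j = j' := by
  have hj := j.2; have hj' := j'.2
  have hi : (i:ℕ) = (i':ℕ) := by
    rcases Nat.lt_trichotomy (i:ℕ) (i':ℕ) with h'|h'|h'
    · have h2 : ((i:ℕ)+1) * k ≤ (i':ℕ) * k := Nat.mul_le_mul_right k h'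
      rw [Nat.add_mul, Nat.one_mul] at h2; omega
    · exact h'
    · have h2 : ((i':ℕ)+1) * k ≤ (i:ℕ) * k := Nat.mul_le_mul_right k h'
      rw [Nat.add_mul, Nat.one_mul] at h2; omega
  refine ⟨Fin.ext hi, Fin.ext ?_⟩
  rw [hi] at h; omega

lemma vBP_eval1 {n k : ℕ} (w : Fin n → ℤ) (i : Fin n) (j : Fin k)
    (x : Fin (k + n + k * n)) (hx : (x:ℕ) < k) :
    vBP n k w i j x = if (x:ℕ) = (j:ℕ) then (w i : ℝ) else 0 := by
  unfold vBP; split_ifs <;> first | rfl | omega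

lemma vBP_eval2 {n k : ℕ} (w : Fin n → ℤ) (i : Fin n) (j : Fin k)
    (x : Fin (k + n + k * n)) (hx1 : k ≤ (x:ℕ)) (hx2 : (x:ℕ) < k + n) :
    vBP n k w i j x = if (x:ℕ) = k + (i:ℕ) then 1 else 0 := by
  have := j.2
  unfold vBP; split_ifs <;> first | rfl | omega

lemma vBP_eval3 {n k : ℕ} (w : Fin n → ℤ) (i : Fin n) (j : Fin k)
    (x : Fin (k + n + k * n)) (hx : k + n ≤ (x:ℕ)) :
    vBP n k w i j x = if (x:ℕ) = k + n + (i:ℕ)*k + (j:ℕ) then 1 else 0 := by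
  have := j.2
  unfold vBP; split_ifs <;> first | rfl | omega

lemma uBP_eval_low {n k : ℕ} (i : Fin n) (j : Fin k)
    (x : Fin (k + n + k * n)) (hx : (x:ℕ) < k + n) :
    uBP n k i j x = 0 := by
  unfold uBP; split_ifs <;> first | rfl | omega

lemma cBP_eval {n k : ℕ} (b : ℤ) (x : Fin (k + n + k * n)) :
    cBP n k b x = if (x:ℕ) < k then (-b : ℝ) else -1 := rfl

def c1idx (n k : ℕ) (j : Fin k) : Fin (k + n + k * n) :=
  ⟨(j:ℕ), by have := j.2; omega⟩

def c2idx (n k : ℕ) (i : Fin n) : Fin (k + n + k * n) :=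
  ⟨k + (i:ℕ), by have := i.2; omega⟩

def c3idx (n k : ℕ) (i : Fin n) (j : Fin k) : Fin (k + n + k * n) :=
  ⟨k + n + (i:ℕ)*k + (j:ℕ), coord3_lt i j⟩

@[simp] lemma c1idx_val (n k : ℕ) (j : Fin k) : ((c1idx n k j : Fin _) : ℕ) = (j:ℕ) := rfl
@[simp] lemma c2idx_val (n k : ℕ) (i : Fin n) : ((c2idx n k i : Fin _) : ℕ) = k + (i:ℕ) := rfl
@[simp] lemma c3idx_val (n k : ℕ) (i : Fin n) (j : Fin k) :
    ((c3idx n k i j : Fin _) : ℕ) = k + n + (i:ℕ)*k + (j:ℕ) := rfl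

lemma vBP_ne_uBP {n k : ℕ} (w : Fin n → ℤ) (i : Fin n) (j : Fin k) :
    vBP n k w i j ≠ uBP n k i j := by
  intro h
  have h2 := congrFun h (c2idx n k i)
  rw [vBP_eval2 (hx1 := by simp) (hx2 := by simp [i.2]),
      uBP_eval_low (hx := by simp [i.2])] at h2
  simp at h2

/-- p applied at a zone-3 coordinate. -/
lemma p_eval3 {n k : ℕ} {w : Fin n → ℤ} {p : Fin n × Fin k → Fin (k + n + k * n) → ℝ}
    (hp : ∀ l : Fin n × Fin k, p l = vBP n k w l.1 l.2 ∨ p l = uBP n k l.1 l.2)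
    (l0 l : Fin n × Fin k) :
    p l (c3idx n k l0.1 l0.2) = if l = l0 then 1 else 0 := by
  have hcond : ((c3idx n k l0.1 l0.2 : Fin _) : ℕ) = k + n + (l.1:ℕ)*k + (l.2:ℕ) ↔ l = l0 := by
    simp only [c3idx_val]
    constructor
    · intro h
      obtain ⟨h1, h2⟩ := enc_inj (i := l0.1) (i' := l.1) (j := l0.2) (j' := l.2) (by omega)
      exact Prod.ext h1.symm h2.symm
    · rintro rfl; rfl
  rcases hp l with h | h <;> rw [h]
  · rw [vBP_eval3 (hx := by simp; omega)]
    simp only [hcond]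
  · unfold uBP
    simp only [hcond]

open Classical in
lemma p_eval2 {n k : ℕ} {w : Fin n → ℤ} {p : Fin n × Fin k → Fin (k + n + k * n) → ℝ}
    (hp : ∀ l : Fin n × Fin k, p l = vBP n k w l.1 l.2 ∨ p l = uBP n k l.1 l.2)
    (i : Fin n) (l : Fin n × Fin k) :
    p l (c2idx n k i) = if l.1 = i ∧ p l = vBP n k w l.1 l.2 then 1 else 0 := by
  rcases hp l with h | h
  · rw [h, vBP_eval2 (hx1 := by simp) (hx2 := by simpa using i.2)]
    simp only [c2idx_val]
    have hc : (k + (i:ℕ) = k + (l.1:ℕ)) ↔ (l.1 = i) :=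
      ⟨fun hh => Fin.ext (by omega), fun h1 => by rw [h1]⟩
    simp [hc]
    by_cases h' : l.1 = i
    · subst h'; simp
    · rw [if_neg h', if_neg (fun e => h' (Fin.ext e).symm)]
  · rw [h, uBP_eval_low (hx := by simpa using i.2)]
    symm; rw [if_neg]
    rintro ⟨-, hvv⟩
    exact vBP_ne_uBP w l.1 l.2 hvv.symm

open Classical in
lemma p_eval1 {n k : ℕ} {w : Fin n → ℤ} {p : Fin n × Fin k → Fin (k + n + k * n) → ℝ}
    (hp : ∀ l : Fin n × Fin k, p l = vBP n k w l.1 l.2 ∨ p l = uBP n k l.1 l.2)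
    (j : Fin k) (l : Fin n × Fin k) :
    p l (c1idx n k j) = if l.2 = j ∧ p l = vBP n k w l.1 l.2 then (w l.1 : ℝ) else 0 := by
  rcases hp l with h | h
  · rw [h, vBP_eval1 (hx := by simp)]
    simp only [c1idx_val]
    have hc : ((j:ℕ) = (l.2:ℕ)) ↔ (l.2 = j) :=
      ⟨fun hh => Fin.ext (by omega), fun h1 => by rw [h1]⟩
    simp [hc]
  · rw [h, uBP_eval_low (hx := by have := j.2; simp; omega)]
    symm; rw [if_neg]
    rintro ⟨-, hvv⟩
    exact vBP_ne_uBP w l.1 l.2 hvv.symm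

lemma sum3 {n k : ℕ} {w : Fin n → ℤ} {p : Fin n × Fin k → Fin (k + n + k * n) → ℝ}
    (hp : ∀ l : Fin n × Fin k, p l = vBP n k w l.1 l.2 ∨ p l = uBP n k l.1 l.2)
    (lam : Fin n × Fin k → ℝ) (l0 : Fin n × Fin k) :
    ∑ l, lam l * p l (c3idx n k l0.1 l0.2) = lam l0 := by
  simp only [p_eval3 hp l0, mul_ite, mul_one, mul_zero, Finset.sum_ite_eq',
    Finset.mem_univ, if_true]

open Classical in
lemma sum2' {n k : ℕ} {w : Fin n → ℤ} {p : Fin n × Fin k → Fin (k + n + k * n) → ℝ}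
    (hp : ∀ l : Fin n × Fin k, p l = vBP n k w l.1 l.2 ∨ p l = uBP n k l.1 l.2)
    (i : Fin n) :
    ∑ l, p l (c2idx n k i)
      = ((Finset.univ.filter fun j : Fin k => p (i, j) = vBP n k w i j).card : ℝ) := by
  simp only [p_eval2 hp i]
  rw [Fintype.sum_prod_type]
  have hin : ∀ i' : Fin n,
      (∑ j' : Fin k, if (i', j').1 = i ∧ p (i', j') = vBP n k w (i', j').1 (i', j').2
          then (1:ℝ) else 0)
      = if i' = i then ((Finset.univ.filter
          fun j : Fin k => p (i, j) = vBP n k w i j).card : ℝ) else 0 := by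
    intro i'
    by_cases hi : i' = i
    · subst hi
      simp [Finset.sum_boole]
    · simp [hi]
  rw [Finset.sum_congr rfl fun i' _ => hin i', Finset.sum_ite_eq']
  simp

open Classical in
lemma sum1 {n k : ℕ} {w : Fin n → ℤ} {p : Fin n × Fin k → Fin (k + n + k * n) → ℝ}
    (hp : ∀ l : Fin n × Fin k, p l = vBP n k w l.1 l.2 ∨ p l = uBP n k l.1 l.2)
    {assign : Fin n → Fin k}
    (hv : ∀ l : Fin n × Fin k, p l = vBP n k w l.1 l.2 ↔ assign l.1 = l.2)
    (j : Fin k) :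
    ∑ l, p l (c1idx n k j)
      = ∑ i ∈ Finset.univ.filter (fun i => assign i = j), (w i : ℝ) := by
  simp only [p_eval1 hp j]
  rw [Fintype.sum_prod_type]
  have hin : ∀ i' : Fin n,
      (∑ j' : Fin k, if (i', j').2 = j ∧ p (i', j') = vBP n k w (i', j').1 (i', j').2
          then ((w (i', j').1 : ℤ) : ℝ) else 0)
      = if assign i' = j then ((w i' : ℤ) : ℝ) else 0 := by
    intro i'
    have hterm : ∀ j' : Fin k,
        (if (i', j').2 = j ∧ p (i', j') = vBP n k w (i', j').1 (i', j').2
          then ((w (i', j').1 : ℤ) : ℝ) else 0)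
        = if j' = j then (if assign i' = j then ((w i' : ℤ) : ℝ) else 0) else 0 := by
      intro j'
      by_cases h1 : j' = j
      · subst h1
        simp [hv (i', j')]
      · simp [h1]
    simp only [hterm]
    rw [Finset.sum_ite_eq']
    simp
  rw [Finset.sum_congr rfl fun i' _ => hin i', Finset.sum_filter]

open Classical in
lemma sum2 {n k : ℕ} {w : Fin n → ℤ} {p : Fin n × Fin k → Fin (k + n + k * n) → ℝ}
    (hp : ∀ l : Fin n × Fin k, p l = vBP n k w l.1 l.2 ∨ p l = uBP n k l.1 l.2)
    {assign : Fin n → Fin k}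
    (hv : ∀ l : Fin n × Fin k, p l = vBP n k w l.1 l.2 ↔ assign l.1 = l.2)
    (i : Fin n) :
    ∑ l, p l (c2idx n k i) = 1 := by
  rw [sum2' hp i]
  have : (Finset.univ.filter fun j : Fin k => p (i, j) = vBP n k w i j)
      = {assign i} := by
    ext j
    simp only [Finset.mem_filter, Finset.mem_univ, true_and, Finset.mem_singleton]
    rw [hv (i, j)]
    exact ⟨fun h => h.symm, fun h => h.symm⟩
  rw [this]
  simp

/-- correctness of the EqualBinPacking reduction. -/
theorem stmt10 (n k : ℕ) (hn : 0 < n) (hk : 0 < k)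
    (w : Fin n → ℤ) (hw : ∀ i, 0 < w i) (b : ℤ) :
    (∃ (p : Fin n × Fin k → Fin (k + n + k * n) → ℝ) (lam : Fin n × Fin k → ℝ) (lamc : ℝ),
        (∀ l : Fin n × Fin k, p l = vBP n k w l.1 l.2 ∨ p l = uBP n k l.1 l.2) ∧
        ((∑ l, lam l • p l) + lamc • cBP n k b = 0) ∧
        ((∑ l, lam l) + lamc = k * n + 1)) ↔
      ∃ assign : Fin n → Fin k, ∀ j : Fin k,
        (∑ i ∈ Finset.univ.filter fun i => assign i = j, w i) = b := by
  classical
  constructor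
  · rintro ⟨p, lam, lamc, hp, hz, hs⟩
    have hz' : ∀ x, (∑ l, lam l * p l x) + lamc * cBP n k b x = 0 := by
      intro x
      have := congrFun hz x
      simpa [Finset.sum_apply] using this
    -- all coefficients equal lamc
    have hlam : ∀ l, lam l = lamc := by
      intro l
      have h := hz' (c3idx n k l.1 l.2)
      rw [sum3 hp lam l] at h
      have hc : cBP n k b (c3idx n k l.1 l.2) = -1 := by
        unfold cBP; rw [if_neg]; simp; omega
      rw [hc] at h; linarith
    have hlamc : lamc = 1 := by
      have h2 : ∑ l : Fin n × Fin k, lam l = ((n * k : ℕ) : ℝ) * lamc := by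
        rw [Finset.sum_congr rfl fun l _ => hlam l]
        simp [Finset.card_univ, mul_comm]
      rw [h2] at hs
      have hpos : (0:ℝ) < ((n * k : ℕ) : ℝ) + 1 := by positivity
      have h3 : (((n * k : ℕ) : ℝ) + 1) * lamc = (((n * k : ℕ) : ℝ) + 1) * 1 := by
        push_cast at hs ⊢
        linear_combination hs
      exact mul_left_cancel₀ (ne_of_gt hpos) h3
    -- for each i exactly one chosen v
    have key : ∀ i : Fin n, ∃ a : Fin k, ∀ j : Fin k,
        p (i, j) = vBP n k w i j ↔ j = a := by
      intro i
      have h := hz' (c2idx n k i)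
      have hsum : (∑ l, lam l * p l (c2idx n k i)) = ∑ l, p l (c2idx n k i) :=
        Finset.sum_congr rfl fun l _ => by rw [hlam l, hlamc, one_mul]
      rw [hsum, sum2' hp i] at h
      have hc : cBP n k b (c2idx n k i) = -1 := by
        unfold cBP; rw [if_neg]; simp
      rw [hc, hlamc] at h
      have hcard : (Finset.univ.filter fun j : Fin k =>
          p (i, j) = vBP n k w i j).card = 1 := by
        have h4 : ((Finset.univ.filter fun j : Fin k =>
            p (i, j) = vBP n k w i j).card : ℝ) = 1 := by linarith
        exact_mod_cast h4
      obtain ⟨a, ha⟩ := Finset.card_eq_one.mp hcard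
      refine ⟨a, fun j => ?_⟩
      have := Finset.ext_iff.mp ha j
      simpa [Finset.mem_filter] using this
    choose assign hassign using key
    have hv : ∀ l : Fin n × Fin k, p l = vBP n k w l.1 l.2 ↔ assign l.1 = l.2 :=
      fun l => (hassign l.1 l.2).trans eq_comm
    refine ⟨assign, fun j => ?_⟩
    have h := hz' (c1idx n k j)
    have hsum : (∑ l, lam l * p l (c1idx n k j)) = ∑ l, p l (c1idx n k j) :=
      Finset.sum_congr rfl fun l _ => by rw [hlam l, hlamc, one_mul]
    rw [hsum, sum1 hp hv j, hlamc] at h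
    have hc : cBP n k b (c1idx n k j) = -b := by
      unfold cBP; rw [if_pos]; simpa using j.2
    rw [hc] at h
    have h5 : ((∑ i ∈ Finset.univ.filter fun i => assign i = j, w i : ℤ) : ℝ)
        = (b : ℝ) := by push_cast; linarith
    exact_mod_cast h5
  · rintro ⟨assign, hassign⟩
    set p : Fin n × Fin k → Fin (k + n + k * n) → ℝ :=
      fun l => if assign l.1 = l.2 then vBP n k w l.1 l.2 else uBP n k l.1 l.2 with hpdef
    have hp : ∀ l : Fin n × Fin k, p l = vBP n k w l.1 l.2 ∨ p l = uBP n k l.1 l.2 := by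
      intro l; by_cases h : assign l.1 = l.2 <;> simp [hpdef, h]
    have hv : ∀ l : Fin n × Fin k, p l = vBP n k w l.1 l.2 ↔ assign l.1 = l.2 := by
      intro l
      constructor
      · intro h
        by_contra hne
        rw [hpdef] at h
        simp only [if_neg hne] at h
        exact vBP_ne_uBP w l.1 l.2 h.symm
      · intro h; simp [hpdef, h]
    refine ⟨p, fun _ => 1, 1, hp, ?_, ?_⟩
    · funext x
      simp only [Pi.add_apply, Finset.sum_apply, Pi.smul_apply, one_smul, Pi.zero_apply]
      have hx := x.2
      by_cases h1 : (x : ℕ) < k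
      · have hxe : x = c1idx n k ⟨(x : ℕ), h1⟩ := Fin.ext rfl
        rw [hxe, sum1 hp hv ⟨(x : ℕ), h1⟩]
        have hc : cBP n k b (c1idx n k ⟨(x : ℕ), h1⟩) = -b := by
          unfold cBP; rw [if_pos]; simpa using h1
        rw [hc]
        have h6 := hassign ⟨(x : ℕ), h1⟩
        have h7 : (∑ i ∈ Finset.univ.filter fun i => assign i = ⟨(x : ℕ), h1⟩,
            ((w i : ℤ) : ℝ)) = (b : ℝ) := by exact_mod_cast congrArg (Int.cast : ℤ → ℝ) h6
        rw [h7]; ring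
      · by_cases h2 : (x : ℕ) < k + n
        · have hxe : x = c2idx n k ⟨(x : ℕ) - k, by omega⟩ := Fin.ext (by simp; omega)
          rw [hxe, sum2 hp hv]
          have hc : cBP n k b (c2idx n k ⟨(x : ℕ) - k, by omega⟩) = -1 := by
            unfold cBP; rw [if_neg]; simp
          rw [hc]; ring
        · set m := (x : ℕ) - (k + n) with hm
          have hmlt : m < k * n := by omega
          have hik : m / k < n := by
            rw [Nat.div_lt_iff_lt_mul hk]
            have hcomm : n * k = k * n := Nat.mul_comm n k
            omega
          have hxe : x = c3idx n k ⟨m / k, hik⟩ ⟨m % k, Nat.mod_lt _ hk⟩ := by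
            apply Fin.ext
            have hqr : (m / k) * k + m % k = m := by
              rw [Nat.mul_comm]; exact Nat.div_add_mod m k
            simp only [c3idx]
            have hgoal : k + n + m / k * k + m % k = k + n + m := by
              rw [Nat.add_assoc (k + n) (m / k * k) (m % k), hqr]
            rw [hgoal]
            omega
          rw [hxe]
          have h8 : ∑ l, p l (c3idx n k ⟨m / k, hik⟩ ⟨m % k, Nat.mod_lt _ hk⟩) = 1 := by
            have h9 := sum3 hp (fun _ => 1) (⟨m / k, hik⟩, ⟨m % k, Nat.mod_lt _ hk⟩)
            simpa using h9
          rw [h8]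
          have hc : cBP n k b (c3idx n k ⟨m / k, hik⟩ ⟨m % k, Nat.mod_lt _ hk⟩) = -1 := by
            unfold cBP
            rw [if_neg]
            simp only [c3idx_val, not_lt]
            calc k ≤ k + n := Nat.le_add_right _ _
              _ ≤ k + n + m / k * k := Nat.le_add_right _ _
              _ ≤ k + n + m / k * k + m % k := Nat.le_add_right _ _
          rw [hc]; ring
    · rw [Finset.sum_const, Finset.card_univ]
      simp only [Fintype.card_prod, Fintype.card_fin, nsmul_eq_mul, mul_one]
      push_cast; ring
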